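/- A right R-module M has couniserial dimension if and only if for every descending chain of submodules M_1 ≥ M_2 ≥ ... of M, there exists n ≥ 1 such that either M_n is uniform or M_n ≅ M_k for all k ≥ n. -/

import Mathlib

universe u v w

/-- A module is *uniform* if it is nonzero and any two nonzero submodules intersect
nontrivially. -/
def IsUniformModule (R : Type u) [Ring R] (M : Type v) [AddCommGroup M] [Module R M] : Prop :=
  Nontrivial M ∧ ∀ N₁ N₂ : Submodule R M, N₁ ≠ ⊥ → N₂ ≠ ⊥ → N₁ ⊓ N₂ ≠ ⊥

/-- The classes `ζ_α`, defined by transfinite induction: `ζ_1` is the class of uniform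
modules, and for `α > 1`, `M ∈ ζ_α` iff every nonzero submodule `N` of `M` with `N ≇ M`
lies in `ζ_β` for some `β < α`. -/
def ModuleZeta (R : Type u) [Ring R] (α : Ordinal.{v}) (M : Type v) [AddCommGroup M]
    [Module R M] : Prop :=
  (α = 1 ∧ IsUniformModule R M) ∨
    (1 < α ∧ ∀ N : Submodule R M, N ≠ ⊥ → ¬ Nonempty (N ≃ₗ[R] M) →
      ∃ β, ∃ _ : β < α, ModuleZeta R β N)
termination_by α

/-- A module has couniserial dimension iff it lies in `ζ_α` for some ordinal `α`. -/
def HasCUDim (R : Type u) [Ring R] (M : Type v) [AddCommGroup M] [Module R M] : Prop :=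
  ∃ α : Ordinal.{v}, ModuleZeta R α M

open Classical in
/-- The couniserial dimension of a module: the least `α` with `M ∈ ζ_α`, with the
convention that the zero module has couniserial dimension `0`. -/
noncomputable def cuDim (R : Type u) [Ring R] (M : Type v) [AddCommGroup M] [Module R M] :
    Ordinal.{v} :=
  if Subsingleton M then 0 else sInf {α | ModuleZeta R α M}

/-- A submodule is *essential* if it meets every nonzero submodule nontrivially. -/
def IsEssentialSubmodule (R : Type u) [Ring R] {M : Type v} [AddCommGroup M] [Module R M]
    (N : Submodule R M) : Prop :=
  ∀ K : Submodule R M, K ≠ ⊥ → N ⊓ K ≠ ⊥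

/-- A module is *indecomposable* if it is nonzero and is not an (internal) direct sum of two
nonzero submodules. -/
def IsIndecomposableModule (R : Type u) [Ring R] (M : Type v) [AddCommGroup M]
    [Module R M] : Prop :=
  Nontrivial M ∧ ∀ A B : Submodule R M, IsCompl A B → A = ⊥ ∨ B = ⊥

/-- A module is *coHopfian* if it is not isomorphic to a proper submodule of itself. -/
def IsCoHopfianModule (R : Type u) [Ring R] (M : Type v) [AddCommGroup M] [Module R M] : Prop :=
  ∀ N : Submodule R M, Nonempty (M ≃ₗ[R] N) → N = ⊤

/-- A module is *fully coHopfian* if every submodule is coHopfian. -/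
def IsFullyCoHopfianModule (R : Type u) [Ring R] (M : Type v) [AddCommGroup M]
    [Module R M] : Prop :=
  ∀ N : Submodule R M, IsCoHopfianModule R N

/-- A module `N` has the *cancellation property* if `N ⊕ A ≅ N ⊕ B` implies `A ≅ B`. -/
def HasCancellation (R : Type u) [Ring R] (N : Type v) [AddCommGroup N] [Module R N] : Prop :=
  ∀ (A B : Type v) [AddCommGroup A] [Module R A] [AddCommGroup B] [Module R B],
    Nonempty ((N × A) ≃ₗ[R] (N × B)) → Nonempty (A ≃ₗ[R] B)

/-- A module is *Dedekind finite* if it is not isomorphic to a proper direct summand of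
itself. -/
def IsDedekindFiniteModule (R : Type u) [Ring R] (M : Type v) [AddCommGroup M]
    [Module R M] : Prop :=
  ∀ A B : Submodule R M, IsCompl A B → Nonempty (M ≃ₗ[R] A) → B = ⊥

/-- A ring is *semiprime* if it has no nonzero nilpotent two-sided ideal; equivalently,
`a R a = 0` implies `a = 0`. -/
def IsSemiprimeRing (R : Type u) [Ring R] : Prop :=
  ∀ a : R, (∀ x : R, a * x * a = 0) → a = 0

/-- An ideal is an *annihilator ideal* if it is the annihilator of a subset of the ring. -/
def IsAnnihilatorIdeal (R : Type u) [Ring R] (I : Ideal R) : Prop :=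
  ∃ S : Set R, (I : Set R) = {x : R | ∀ s ∈ S, x * s = 0}

/-- A module has *uniform dimension `n`* if it contains `n` independent uniform submodules
whose direct sum is essential. -/
def HasFiniteUniformDim (R : Type u) [Ring R] (M : Type v) [AddCommGroup M] [Module R M]
    (n : ℕ) : Prop :=
  ∃ U : Fin n → Submodule R M, iSupIndep U ∧ (∀ i, IsUniformModule R (U i)) ∧
    IsEssentialSubmodule R (⨆ i, U i)

/-- A ring is *Goldie* if it has the ascending chain condition on annihilator ideals and
finite uniform dimension as a module over itself. -/
def IsGoldieRing (R : Type u) [Ring R] : Prop :=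
  (∀ f : ℕ → Ideal R, (∀ n, IsAnnihilatorIdeal R (f n)) → Monotone f →
      ∃ n, ∀ k, n ≤ k → f k = f n) ∧
    ∃ n : ℕ, HasFiniteUniformDim R R n

section Aux
variable {R : Type u} [Ring R]

lemma uniform_congr {M N : Type v} [AddCommGroup M] [Module R M]
    [AddCommGroup N] [Module R N] (e : M ≃ₗ[R] N) (h : IsUniformModule R M) :
    IsUniformModule R N := by
  obtain ⟨hnt, hu⟩ := h
  refine ⟨e.symm.toEquiv.nontrivial, fun N₁ N₂ h1 h2 => ?_⟩
  have key : ∀ P : Submodule R N, P ≠ ⊥ → P.comap (e : M →ₗ[R] N) ≠ ⊥ := by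
    intro P hP
    obtain ⟨x, hx, hx0⟩ := (Submodule.ne_bot_iff P).1 hP
    refine (Submodule.ne_bot_iff _).2 ⟨e.symm x, ?_, ?_⟩
    · simpa [Submodule.mem_comap] using hx
    · simpa using fun hz => hx0 (by simpa [hz] using (e.symm_apply_eq).1 hz ▸ rfl)
  have hne := hu _ _ (key N₁ h1) (key N₂ h2)
  obtain ⟨x, hx, hx0⟩ := (Submodule.ne_bot_iff _).1 hne
  refine (Submodule.ne_bot_iff _).2 ⟨e x, ⟨?_, ?_⟩, ?_⟩
  · simpa [Submodule.mem_comap] using hx.1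
  · simpa [Submodule.mem_comap] using hx.2
  · simpa using hx0

lemma uniform_submodule {M : Type v} [AddCommGroup M] [Module R M]
    (h : IsUniformModule R M) (N : Submodule R M) (hN : N ≠ ⊥) :
    IsUniformModule R N := by
  obtain ⟨hnt, hu⟩ := h
  refine ⟨Submodule.nontrivial_iff_ne_bot.2 hN, fun P₁ P₂ h1 h2 => ?_⟩
  have key : ∀ P : Submodule R N, P ≠ ⊥ → P.map N.subtype ≠ ⊥ := by
    intro P hP
    obtain ⟨x, hx, hx0⟩ := (Submodule.ne_bot_iff P).1 hP
    refine (Submodule.ne_bot_iff _).2 ⟨(x : M), Submodule.mem_map_of_mem hx, ?_⟩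
    simpa using hx0
  have hne := hu _ _ (key P₁ h1) (key P₂ h2)
  obtain ⟨x, hx, hx0⟩ := (Submodule.ne_bot_iff _).1 hne
  obtain ⟨y₁, hy₁, hxy₁⟩ := hx.1
  obtain ⟨y₂, hy₂, hxy₂⟩ := hx.2
  have hyy : y₂ = y₁ := N.injective_subtype (hxy₂.trans hxy₁.symm)
  refine (Submodule.ne_bot_iff _).2 ⟨y₁, ⟨hy₁, hyy ▸ hy₂⟩, ?_⟩
  intro hz
  exact hx0 (by rw [← hxy₁, hz]; simp)

lemma moduleZeta_congr (α : Ordinal.{v}) :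
    ∀ {M N : Type v} [AddCommGroup M] [Module R M] [AddCommGroup N] [Module R N],
      (M ≃ₗ[R] N) → ModuleZeta R α M → ModuleZeta R α N := by
  induction α using Ordinal.induction with
  | _ α IH =>
    intro M N _ _ _ _ e h
    rw [ModuleZeta] at h ⊢
    rcases h with ⟨h1, hu⟩ | ⟨h1, h2⟩
    · exact Or.inl ⟨h1, uniform_congr e hu⟩
    · refine Or.inr ⟨h1, fun N' hN' hiso => ?_⟩
      set M' := N'.comap (e : M →ₗ[R] N) with hM'def
      have hmc : M'.map (e : M →ₗ[R] N) = N' :=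
        Submodule.map_comap_eq_of_surjective e.surjective N'
      have hM' : M' ≠ ⊥ := by
        intro hbb
        rw [hbb, Submodule.map_bot] at hmc
        exact hN' hmc.symm
      have eM' : (M' : Type v) ≃ₗ[R] N' :=
        (e.submoduleMap M').trans (LinearEquiv.ofEq _ _ hmc)
      have hMiso : ¬ Nonempty ((M' : Type v) ≃ₗ[R] M) := by
        rintro ⟨u⟩
        exact hiso ⟨(eM'.symm.trans u).trans e⟩
      obtain ⟨β, hβ, hz⟩ := h2 M' hM' hMiso
      exact ⟨β, hβ, IH β hβ eM' hz⟩

lemma hasCUDim_congr {M N : Type v} [AddCommGroup M] [Module R M]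
    [AddCommGroup N] [Module R N] (e : M ≃ₗ[R] N) (h : HasCUDim R M) : HasCUDim R N := by
  obtain ⟨α, hα⟩ := h
  exact ⟨α, moduleZeta_congr α e hα⟩

lemma hasCUDim_of_uniform {M : Type v} [AddCommGroup M] [Module R M]
    (h : IsUniformModule R M) : HasCUDim R M := by
  refine ⟨1, ?_⟩
  rw [ModuleZeta]
  exact Or.inl ⟨rfl, h⟩

lemma fwd_aux (α : Ordinal.{v}) :
    ∀ (M : Type v) [AddCommGroup M] [Module R M], ModuleZeta R α M →
      ∀ f : ℕ → Submodule R M, (∀ n, f (n + 1) ≤ f n) →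
        ∃ n, IsUniformModule R (f n) ∨ ∀ k, n ≤ k → Nonempty ((f n : Type v) ≃ₗ[R] f k) := by
  induction α using Ordinal.induction with
  | _ α IH =>
    intro M _ _ h f hf
    have hanti : Antitone f := antitone_nat_of_succ_le hf
    rw [ModuleZeta] at h
    rcases h with ⟨h1, hu⟩ | ⟨h1, h2⟩
    · by_cases hb : f 0 = ⊥
      · refine ⟨0, Or.inr fun k hk => ?_⟩
        have hk0 : f k = f 0 := le_antisymm (hanti hk) (hb ▸ bot_le)
        exact ⟨LinearEquiv.ofEq _ _ hk0.symm⟩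
      · exact ⟨0, Or.inl (uniform_submodule hu _ hb)⟩
    · by_cases hall : ∀ n, Nonempty ((f n : Type v) ≃ₗ[R] M)
      · refine ⟨0, Or.inr fun k _ => ?_⟩
        obtain ⟨e0⟩ := hall 0
        obtain ⟨ek⟩ := hall k
        exact ⟨e0.trans ek.symm⟩
      · push_neg at hall
        obtain ⟨n₀, hn₀⟩ := hall
        by_cases hb : f n₀ = ⊥
        · refine ⟨n₀, Or.inr fun k hk => ?_⟩
          have hk0 : f k = f n₀ := le_antisymm (hanti hk) (hb ▸ bot_le)
          exact ⟨LinearEquiv.ofEq _ _ hk0.symm⟩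
        · obtain ⟨β, hβ, hz⟩ := h2 (f n₀) hb (not_nonempty_iff.2 hn₀)
          set g : ℕ → Submodule R (f n₀) :=
            fun k => (f (n₀ + k)).comap (f n₀).subtype with hg
          have hgdesc : ∀ k, g (k + 1) ≤ g k := fun k =>
            Submodule.comap_mono (hf (n₀ + k))
          obtain ⟨m, hm⟩ := IH β hβ (f n₀) hz g hgdesc
          have egm : ∀ k, (g k : Type v) ≃ₗ[R] f (n₀ + k) := fun k =>
            Submodule.comapSubtypeEquivOfLe (hanti (Nat.le_add_right n₀ k))
          rcases hm with hm | hm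
          · exact ⟨n₀ + m, Or.inl (uniform_congr (egm m) hm)⟩
          · refine ⟨n₀ + m, Or.inr fun k hk => ?_⟩
            have hj : m ≤ k - n₀ := by omega
            have hj2 : n₀ + (k - n₀) = k := by omega
            obtain ⟨u⟩ := hm (k - n₀) hj
            have e1 : ((f (n₀ + m) : Submodule R M) : Type v) ≃ₗ[R] g m := (egm m).symm
            have e2 : (g (k - n₀) : Type v) ≃ₗ[R] f (n₀ + (k - n₀)) := egm (k - n₀)
            have e3 : ((f (n₀ + (k - n₀)) : Submodule R M) : Type v) ≃ₗ[R] f k :=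
              LinearEquiv.ofEq _ _ (by rw [hj2])
            exact ⟨((e1.trans u).trans e2).trans e3⟩

lemma exists_bad {M : Type v} [AddCommGroup M] [Module R M] (h : ¬ HasCUDim R M) :
    ∃ N : Submodule R M, ¬ Nonempty ((N : Type v) ≃ₗ[R] M) ∧ ¬ HasCUDim R N := by
  by_contra hc
  push_neg at hc
  apply h
  set F : Submodule R M → Ordinal.{v} := fun N => sInf {β | ModuleZeta R β N} with hF
  refine ⟨(⨆ N, F N) + 2, ?_⟩
  rw [ModuleZeta]
  refine Or.inr ⟨lt_of_lt_of_le one_lt_two (le_add_self (a := (2 : Ordinal.{v}))), fun N hN hiso => ?_⟩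
  obtain ⟨γ, hγ⟩ := hc N (not_nonempty_iff.1 hiso)
  have hmem : ModuleZeta R (F N) N := csInf_mem (⟨γ, hγ⟩ : {β | ModuleZeta R β N}.Nonempty)
  refine ⟨F N, ?_, hmem⟩
  calc F N ≤ ⨆ N, F N := le_ciSup (Ordinal.bddAbove_range F) N
    _ < (⨆ N, F N) + 2 := by
        conv_lhs => rw [← add_zero (⨆ N, F N)]
        exact (add_lt_add_iff_left _).2 zero_lt_two

end Aux

/-- `M` has couniserial dimension iff for every descending chain of submodules
`M_1 ≥ M_2 ≥ ⋯` there is `n` with `M_n` uniform or `M_n ≅ M_k` for all `k ≥ n`. -/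
theorem stmt1 (R : Type u) [Ring R] (M : Type v) [AddCommGroup M] [Module R M] :
    HasCUDim R M ↔
      ∀ f : ℕ → Submodule R M, (∀ n, f (n + 1) ≤ f n) →
        ∃ n, IsUniformModule R (f n) ∨ ∀ k, n ≤ k → Nonempty (f n ≃ₗ[R] f k) := by
  constructor
  · rintro ⟨α, hα⟩ f hf
    exact fwd_aux α M hα f hf
  · intro hchain
    by_contra hM
    have step : ∀ N : Submodule R M, ¬ HasCUDim R N →
        ∃ N' : Submodule R M, N' ≤ N ∧ ¬ Nonempty ((N' : Type v) ≃ₗ[R] N) ∧ ¬ HasCUDim R N' := by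
      intro N hN
      obtain ⟨P, hPi, hPc⟩ := exists_bad hN
      have e : (P : Type v) ≃ₗ[R] P.map N.subtype :=
        Submodule.equivMapOfInjective N.subtype N.injective_subtype P
      refine ⟨P.map N.subtype, Submodule.map_subtype_le N P, ?_, ?_⟩
      · rintro ⟨u⟩; exact hPi ⟨e.trans u⟩
      · intro hc; exact hPc (hasCUDim_congr e.symm hc)
    have htop : ¬ HasCUDim R ((⊤ : Submodule R M) : Type v) := fun hc =>
      hM (hasCUDim_congr Submodule.topEquiv hc)
    let g : ℕ → {N : Submodule R M // ¬ HasCUDim R N} := fun n =>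
      Nat.rec ⟨⊤, htop⟩ (fun _ p => ⟨(step p.1 p.2).choose, (step p.1 p.2).choose_spec.2.2⟩) n
    have hdesc : ∀ n, (g (n + 1)).1 ≤ (g n).1 := fun n => (step (g n).1 (g n).2).choose_spec.1
    have hniso : ∀ n, ¬ Nonempty (((g (n + 1)).1 : Type v) ≃ₗ[R] (g n).1) := fun n =>
      (step (g n).1 (g n).2).choose_spec.2.1
    obtain ⟨n, hn⟩ := hchain (fun n => (g n).1) hdesc
    rcases hn with hn | hn
    · exact (g n).2 (hasCUDim_of_uniform hn)
    · exact hniso n ⟨(hn (n + 1) (Nat.le_succ n)).some.symm⟩
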